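/- arXiv:2104.07105 — 2 statements merged into one kernel-verified Lean document; each statement's English description precedes it below -/
import Mathlib

section
/- Suppose V, s and trajectory x : ℕ → ℝⁿ satisfy the dissipation inequality V(x(k+1)) − V(x(k)) ≤ s(x(k)) for all k and the cyclic negativity condition Σ_{i=0}^{M−1} s(x(k+i)) ≤ −α_s(‖x(k)‖) for all k, with α_s ∈ 𝒦∞, and V ≥ 0 along the trajectory. Then the series Σ_{k=0}^{∞} α_s(‖x(k)‖) converges, and consequently lim_{k→∞} α_s(‖x(k)‖) = 0. -/
open Filter Finset NNReal Topology

def ClassK (φ : ℝ≥0 → ℝ≥0) : Prop :=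
  Continuous φ ∧ StrictMono φ ∧ φ 0 = 0

def ClassKInf (φ : ℝ≥0 → ℝ≥0) : Prop :=
  ClassK φ ∧ Filter.Tendsto φ Filter.atTop Filter.atTop

theorem stmt_9 {n : ℕ} (x : ℕ → EuclideanSpace ℝ (Fin n)) (V s : EuclideanSpace ℝ (Fin n) → ℝ)
    (M : ℕ) (hM : 1 ≤ M) (αs : ℝ≥0 → ℝ≥0) (hαs : ClassKInf αs)
    (hV : ∀ k : ℕ, 0 ≤ V (x k))
    (hdiss : ∀ k : ℕ, V (x (k + 1)) - V (x k) ≤ s (x k))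
    (hsup : ∀ k : ℕ, ∑ i ∈ Finset.range M, s (x (k + i)) ≤ -(αs ‖x k‖₊ : ℝ)) :
    Summable (fun k : ℕ => (αs ‖x k‖₊ : ℝ)) ∧
    Filter.Tendsto (fun k : ℕ => (αs ‖x k‖₊ : ℝ)) Filter.atTop (nhds 0) := by
  have key : ∀ k : ℕ, (αs ‖x k‖₊ : ℝ) ≤ V (x k) - V (x (k + M)) := by
    intro k
    have h1 : V (x (k + M)) - V (x k) ≤ ∑ i ∈ Finset.range M, s (x (k + i)) := by
      have tel : ∑ i ∈ Finset.range M, (V (x (k + i + 1)) - V (x (k + i)))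
          = V (x (k + M)) - V (x k) := by
        have := Finset.sum_range_sub (fun i => V (x (k + i))) M
        simpa [add_assoc] using this
      rw [← tel]
      exact Finset.sum_le_sum fun i _ => hdiss (k + i)
    have h2 := hsup k
    linarith
  have hsum : Summable (fun k : ℕ => (αs ‖x k‖₊ : ℝ)) := by
    apply summable_of_sum_range_le (c := ∑ j ∈ Finset.range M, V (x j))
    · intro k; positivity
    · intro N
      have h3 : ∑ k ∈ Finset.range N, (αs ‖x k‖₊ : ℝ)
          ≤ ∑ k ∈ Finset.range N, (V (x k) - V (x (k + M))) :=
        Finset.sum_le_sum fun k _ => key k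
      have h4 : ∑ k ∈ Finset.range N, (V (x k) - V (x (k + M)))
          = ∑ k ∈ Finset.range N, V (x k) - ∑ k ∈ Finset.range N, V (x (k + M)) :=
        Finset.sum_sub_distrib _ _
      have h5 : ∑ k ∈ Finset.range N, V (x k) ≤ ∑ k ∈ Finset.range (M + N), V (x k) :=
        Finset.sum_le_sum_of_subset_of_nonneg
          (Finset.range_subset_range.2 (Nat.le_add_left N M)) (fun i _ _ => hV i)
      have h6 : ∑ k ∈ Finset.range (M + N), V (x k)
          = ∑ j ∈ Finset.range M, V (x j) + ∑ k ∈ Finset.range N, V (x (M + k)) := by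
        exact Finset.sum_range_add (fun i => V (x i)) M N
      have h7 : ∑ k ∈ Finset.range N, V (x (k + M)) = ∑ k ∈ Finset.range N, V (x (M + k)) := by
        simp [Nat.add_comm]
      linarith
  exact ⟨hsum, hsum.tendsto_atTop_zero⟩
end

section
/- Asymptotic convergence from cyclic dissipativity: let x : ℕ → ℝⁿ be contained in a compact set X, let V : ℝⁿ → ℝ satisfy α₁(‖x‖) ≤ V(x) ≤ α₂(‖x‖) on X for some α₁, α₂ ∈ 𝒦∞, let s : ℝⁿ → ℝ satisfy V(x(k+1)) − V(x(k)) ≤ s(x(k)) for all k, and suppose there exist M ≥ 1 and α_s ∈ 𝒦∞ with Σ_{i=0}^{M−1} s(x(k+i)) ≤ −α_s(‖x(k)‖) for all k. Then lim_{k→∞} x(k) = 0. -/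
open Filter Finset NNReal Topology

theorem stmt_10 {n : ℕ} (x : ℕ → EuclideanSpace ℝ (Fin n)) (V s : EuclideanSpace ℝ (Fin n) → ℝ)
    (X : Set (EuclideanSpace ℝ (Fin n))) (hX : IsCompact X) (hxX : ∀ k : ℕ, x k ∈ X)
    (α₁ α₂ : ℝ≥0 → ℝ≥0) (hα₁ : ClassKInf α₁) (hα₂ : ClassKInf α₂)
    (hVbounds : ∀ y ∈ X, (α₁ ‖y‖₊ : ℝ) ≤ V y ∧ V y ≤ (α₂ ‖y‖₊ : ℝ))
    (hdiss : ∀ k : ℕ, V (x (k + 1)) - V (x k) ≤ s (x k))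
    (M : ℕ) (hM : 1 ≤ M) (αs : ℝ≥0 → ℝ≥0) (hαs : ClassKInf αs)
    (hsup : ∀ k : ℕ, ∑ i ∈ Finset.range M, s (x (k + i)) ≤ -(αs ‖x k‖₊ : ℝ)) :
    Filter.Tendsto x Filter.atTop (nhds 0) := by
  set f : ℕ → ℝ := fun k => (αs ‖x k‖₊ : ℝ) with hf
  have hf0 : ∀ k, 0 ≤ f k := fun k => (αs ‖x k‖₊).coe_nonneg
  have hV0 : ∀ k, 0 ≤ V (x k) := fun k =>
    le_trans (α₁ ‖x k‖₊).coe_nonneg (hVbounds (x k) (hxX k)).1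
  -- key decrease over one period
  have key : ∀ k, f k ≤ V (x k) - V (x (k + M)) := by
    intro k
    have htel : ∑ i ∈ Finset.range M, (V (x (k + i + 1)) - V (x (k + i)))
        = V (x (k + M)) - V (x (k + 0)) := Finset.sum_range_sub (fun i => V (x (k + i))) M
    have hle : ∑ i ∈ Finset.range M, (V (x (k + i + 1)) - V (x (k + i)))
        ≤ ∑ i ∈ Finset.range M, s (x (k + i)) :=
      Finset.sum_le_sum fun i _ => hdiss (k + i)
    have := hsup k
    simp only [Nat.add_zero] at htel
    rw [htel] at hle
    simp only [hf]
    linarith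
  -- partial sums along arithmetic progressions
  have prog : ∀ j L, ∑ m ∈ Finset.range L, f (j + m * M) ≤ V (x j) := by
    intro j L
    have h : ∀ L, ∑ m ∈ Finset.range L, f (j + m * M) ≤ V (x j) - V (x (j + L * M)) := by
      intro L
      induction L with
      | zero => simp
      | succ L ih =>
        rw [Finset.sum_range_succ]
        have hk := key (j + L * M)
        have : j + L * M + M = j + (L + 1) * M := by ring
        rw [this] at hk
        linarith
    linarith [h L, hV0 (j + L * M)]
  -- bound all partial sums
  set C : ℝ := ∑ j ∈ Finset.range M, V (x j) with hC
  have hMpos : 0 < M := hM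
  have bound : ∀ N, ∑ k ∈ Finset.range N, f k ≤ C := by
    intro N
    have hinj : Set.InjOn (fun k : ℕ => ((k % M, k / M) : ℕ × ℕ)) (Finset.range N) := by
      intro a _ b _ hab
      have h1 : a % M = b % M := congrArg Prod.fst hab
      have h2 : a / M = b / M := congrArg Prod.snd hab
      calc a = a % M + M * (a / M) := (Nat.mod_add_div a M).symm
        _ = b % M + M * (b / M) := by rw [h1, h2]
        _ = b := Nat.mod_add_div b M
    have hsub : (Finset.range N).image (fun k : ℕ => ((k % M, k / M) : ℕ × ℕ))
        ⊆ Finset.range M ×ˢ Finset.range N := by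
      intro p hp
      simp only [Finset.mem_image, Finset.mem_range] at hp
      obtain ⟨k, hk, rfl⟩ := hp
      simp only [Finset.mem_product, Finset.mem_range]
      exact ⟨Nat.mod_lt _ hMpos, lt_of_le_of_lt (Nat.div_le_self k M) hk⟩
    calc ∑ k ∈ Finset.range N, f k
        = ∑ k ∈ Finset.range N, f (k % M + (k / M) * M) := by
          refine Finset.sum_congr rfl fun k _ => ?_
          rw [Nat.mod_add_div']
      _ = ∑ p ∈ (Finset.range N).image (fun k : ℕ => ((k % M, k / M) : ℕ × ℕ)),
            f (p.1 + p.2 * M) := by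
            rw [Finset.sum_image (fun a ha b hb h => hinj ha hb h)]
      _ ≤ ∑ p ∈ Finset.range M ×ˢ Finset.range N, f (p.1 + p.2 * M) :=
          Finset.sum_le_sum_of_subset_of_nonneg hsub (fun p _ _ => hf0 _)
      _ = ∑ j ∈ Finset.range M, ∑ m ∈ Finset.range N, f (j + m * M) := by
          rw [Finset.sum_product]
      _ ≤ C := Finset.sum_le_sum fun j _ => prog j N
  have hsum : Summable f := summable_of_sum_range_le hf0 bound
  have hten : Tendsto f atTop (nhds 0) := hsum.tendsto_atTop_zero
  -- conclude convergence of x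
  rw [NormedAddCommGroup.tendsto_nhds_zero]
  intro ε hε
  set ε' : ℝ≥0 := ⟨ε, le_of_lt hε⟩ with hε'
  have hε'pos : 0 < ε' := hε
  have hαspos : 0 < αs ε' := by
    have := hαs.1.2.1 hε'pos
    rwa [hαs.1.2.2] at this
  have hαspos' : (0 : ℝ) < (αs ε' : ℝ) := hαspos
  have hev : ∀ᶠ k in atTop, f k < (αs ε' : ℝ) := by
    have := hten.eventually (eventually_lt_nhds hαspos')
    simpa using this
  filter_upwards [hev] with k hk
  by_contra hcon
  push_neg at hcon
  have hεle : ε' ≤ ‖x k‖₊ := by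
    rw [← NNReal.coe_le_coe]
    simp only [coe_nnnorm]
    exact hcon
  have : (αs ε' : ℝ) ≤ f k := by
    exact_mod_cast (hαs.1.2.1.monotone hεle)
  linarith
end
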